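/- Let k ∈ ℝ, λ satisfy λ > 0 if k = 0, λ arbitrary if k > 0, and λ > √(-k) if k < 0, and let l = l_k(λ) where l_k(λ) = 1/λ if k = 0, l_k(λ) = (1/√k)·arccot(λ/√k) if k > 0, and l_k(λ) = (1/√(-k))·arcoth(λ/√(-k)) if k < 0. Suppose f, f̄ : [0, l] → ℝ satisfy: f'' ≤ -k f on [0, l], f(0) = 1, f(l) ≥ 0; and f̄'' = -k f̄ on [0, l], f̄(0) = 1, f̄(l) = 0. Then f(t) ≥ f̄(t) for all t ∈ [0, l]. -/

import Mathlib

open Real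

/-- Generalized cosine `c_k`. -/
noncomputable def ck (k t : ℝ) : ℝ :=
  if k = 0 then 1
  else if 0 < k then Real.cos (Real.sqrt k * t)
  else Real.cosh (Real.sqrt (-k) * t)

/-- Generalized sine `s_k`. -/
noncomputable def sk (k t : ℝ) : ℝ :=
  if k = 0 then t
  else if 0 < k then Real.sin (Real.sqrt k * t) / Real.sqrt k
  else Real.sinh (Real.sqrt (-k) * t) / Real.sqrt (-k)

/-- The radius `l_k(λ)` of the sphere in the space form of curvature `k` with
principal curvature `λ`: `1/λ` if `k = 0`, `(1/√k)·arccot(λ/√k)` if `k > 0`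
(with `arccot x = π/2 - arctan x`), and `(1/√(-k))·arcoth(λ/√(-k))` if `k < 0`
(with `arcoth y = (1/2)·log((y+1)/(y-1))`). -/
noncomputable def lk (k lam : ℝ) : ℝ :=
  if k = 0 then 1 / lam
  else if 0 < k then (Real.pi / 2 - Real.arctan (lam / Real.sqrt k)) / Real.sqrt k
  else (Real.log ((lam / Real.sqrt (-k) + 1) / (lam / Real.sqrt (-k) - 1)) / 2) / Real.sqrt (-k)

/-- `σ_{k,λ}`, the solution of `σ'' + kσ = 0`, `σ(0)=1`, `σ'(0) = -λ`. -/
noncomputable def sigmaK (k lam t : ℝ) : ℝ := ck k t - lam * sk k t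

lemma model (k lam : ℝ) (hlam0 : k = 0 → 0 < lam)
    (hlamneg : k < 0 → Real.sqrt (-k) < lam) :
    ∃ S' : ℝ → ℝ,
      (∀ t, HasDerivAt (sigmaK k lam) (S' t) t) ∧
      (∀ t, HasDerivAt S' (-k * sigmaK k lam t) t) ∧
      sigmaK k lam 0 = 1 ∧
      sigmaK k lam (lk k lam) = 0 ∧
      (∀ t ∈ Set.Ico 0 (lk k lam), 0 < sigmaK k lam t) ∧
      S' (lk k lam) < 0 := by
  rcases lt_trichotomy k 0 with hk | hk | hk
  · -- k < 0
    set s : ℝ := Real.sqrt (-k) with hs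
    have hs0 : 0 < s := Real.sqrt_pos.mpr (by linarith)
    have hs2 : s ^ 2 = -k := Real.sq_sqrt (by linarith)
    have hc1 : 1 < lam / s := (one_lt_div hs0).mpr (hlamneg hk)
    set c : ℝ := lam / s with hcdef
    have hlam : lam = c * s := by rw [hcdef, div_mul_cancel₀ lam hs0.ne']
    have hσ : sigmaK k lam = fun t => Real.cosh (s * t) - lam * (Real.sinh (s * t) / s) := by
      funext t; simp [sigmaK, ck, sk, hk.ne, hk.not_gt, hs]
    have hlk : lk k lam = (Real.log ((c + 1) / (c - 1)) / 2) / s := by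
      simp [lk, hk.ne, hk.not_gt, hcdef, hs]
    have hsl : s * lk k lam = Real.log ((c + 1) / (c - 1)) / 2 := by
      rw [hlk]; field_simp
    have hc0 : (0:ℝ) < c - 1 := by linarith
    have hApos : 0 < (c + 1) / (c - 1) := div_pos (by linarith) hc0
    have key : ∀ t : ℝ, sigmaK k lam t * (2 * Real.exp (s * t)) =
        (1 - c) * Real.exp (s * t) ^ 2 + (1 + c) := by
      intro t
      rw [hσ]
      simp only
      rw [Real.cosh_eq, Real.sinh_eq, Real.exp_neg, hlam]
      have hE := (Real.exp_pos (s * t)).ne'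
      field_simp
      ring
    have he2 : Real.exp (s * lk k lam) ^ 2 = (c + 1) / (c - 1) := by
      rw [hsl, sq, ← Real.exp_add]
      rw [show Real.log ((c+1)/(c-1)) / 2 + Real.log ((c+1)/(c-1)) / 2
            = Real.log ((c+1)/(c-1)) by ring]
      exact Real.exp_log hApos
    refine ⟨fun t => s * Real.sinh (s * t) - lam * Real.cosh (s * t), ?_, ?_, ?_, ?_, ?_, ?_⟩
    · intro t
      have hst : HasDerivAt (fun t : ℝ => s * t) s t := by
        simpa using (hasDerivAt_id t).const_mul s
      have h3 := hst.cosh.sub ((hst.sinh.div_const s).const_mul lam)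
      rw [hσ]
      refine h3.congr_deriv (Eq.symm ?_)
      field_simp
    · intro t
      have hst : HasDerivAt (fun t : ℝ => s * t) s t := by
        simpa using (hasDerivAt_id t).const_mul s
      have h3 := (hst.sinh.const_mul s).sub (hst.cosh.const_mul lam)
      refine h3.congr_deriv (Eq.symm ?_)
      rw [hσ]
      simp only
      field_simp
      linear_combination (lam * Real.sinh (s * t) - s * Real.cosh (s * t)) * hs2
    · simp [hσ]
    · have hkey := key (lk k lam)
      rw [he2] at hkey
      rw [show (1 - c) * ((c + 1) / (c - 1)) + (1 + c) = 0 by field_simp; ring] at hkey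
      rcases mul_eq_zero.mp hkey with h | h
      · exact h
      · exact absurd h (by positivity)
    · intro t ht
      rcases ht with ⟨h1, h2⟩
      have hE2 : Real.exp (s * t) ^ 2 < (c + 1) / (c - 1) := by
        rw [← he2]
        have hlt : s * t < s * lk k lam := mul_lt_mul_of_pos_left h2 hs0
        exact pow_lt_pow_left₀ (Real.exp_lt_exp.mpr hlt) (Real.exp_pos _).le two_ne_zero
      have hkey := key t
      have h4 : (c - 1) * (Real.exp (s * t) ^ 2) < (c - 1) * ((c + 1) / (c - 1)) :=
        mul_lt_mul_of_pos_left hE2 hc0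
      have h5 : (c - 1) * ((c + 1) / (c - 1)) = c + 1 := by field_simp
      nlinarith [Real.exp_pos (s * t), hkey]
    · simp only
      have hE := Real.exp_pos (s * lk k lam)
      have key2 : (s * Real.sinh (s * lk k lam) - lam * Real.cosh (s * lk k lam)) *
          (2 * Real.exp (s * lk k lam)) =
          (s - lam) * Real.exp (s * lk k lam) ^ 2 - (s + lam) := by
        rw [Real.cosh_eq, Real.sinh_eq, Real.exp_neg]
        field_simp
        ring
      have hsl2 : s < lam := hlamneg hk
      nlinarith [hE, key2, mul_pos hE hE]
  · -- k = 0
    refine ⟨fun _ => -lam, ?_, ?_, ?_, ?_, ?_, ?_⟩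
    · intro t
      have : sigmaK k lam = fun t => 1 - lam * t := by
        funext t; simp [sigmaK, ck, sk, hk]
      rw [this]
      simpa using ((hasDerivAt_id t).const_mul lam).const_sub 1
    · intro t
      simpa [hk] using (hasDerivAt_const t (-lam))
    · simp [sigmaK, ck, sk, hk]
    · have h0 : lam ≠ 0 := (hlam0 hk).ne'
      simp [sigmaK, ck, sk, lk, hk]
      field_simp
      norm_num
    · intro t ht
      have hl : 0 < lam := hlam0 hk
      subst hk
      norm_num [sigmaK, ck, sk, lk] at ht ⊢
      rcases ht with ⟨h1, h2⟩
      have h3 : lam * lam⁻¹ = 1 := mul_inv_cancel₀ hl.ne'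
      nlinarith [mul_pos hl (sub_pos.mpr h2)]
    · simpa using neg_lt_zero.mpr (hlam0 hk)
  · -- k > 0
    set s : ℝ := Real.sqrt k with hs
    have hs0 : 0 < s := Real.sqrt_pos.mpr hk
    have hs2 : s ^ 2 = k := Real.sq_sqrt hk.le
    set c : ℝ := lam / s with hcdef
    set φ : ℝ := Real.arctan c with hφ
    have hσ : sigmaK k lam = fun t => Real.cos (s * t) - lam * (Real.sin (s * t) / s) := by
      funext t; simp [sigmaK, ck, sk, hk.ne', hk, hs]
    have hlk : lk k lam = (Real.pi / 2 - φ) / s := by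
      simp [lk, hk.ne', hk, hφ, hcdef, hs]
    have hsl : s * lk k lam = Real.pi / 2 - φ := by
      rw [hlk]; field_simp
    have hcosφ : 0 < Real.cos φ := Real.cos_arctan_pos c
    have hsc : Real.sin φ = c * Real.cos φ := by
      rw [hφ, Real.sin_arctan, Real.cos_arctan]; ring
    refine ⟨fun t => -(s * Real.sin (s * t)) - lam * Real.cos (s * t), ?_, ?_, ?_, ?_, ?_, ?_⟩
    · intro t
      have hst : HasDerivAt (fun t : ℝ => s * t) s t := by
        simpa using (hasDerivAt_id t).const_mul s
      have h1 := hst.cos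
      have h2 := (hst.sin).div_const s
      have h3 := h1.sub (h2.const_mul lam)
      rw [hσ]
      refine h3.congr_deriv (Eq.symm ?_)
      field_simp
    · intro t
      have hst : HasDerivAt (fun t : ℝ => s * t) s t := by
        simpa using (hasDerivAt_id t).const_mul s
      have h1 := (hst.sin.const_mul s).neg
      have h2 := hst.cos.const_mul lam
      have h3 := h1.sub h2
      refine h3.congr_deriv (Eq.symm ?_)
      rw [hσ]
      simp only
      field_simp
      linear_combination (s * Real.cos (s * t) - lam * Real.sin (s * t)) * hs2
    · simp [hσ]
    · rw [hσ]
      simp only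
      rw [hsl, Real.cos_pi_div_two_sub, Real.sin_pi_div_two_sub, hsc]
      have : lam = c * s := by rw [hcdef, div_mul_cancel₀ lam hs0.ne']
      rw [this]
      field_simp
      ring
    · intro t ht
      rcases ht with ⟨h1, h2⟩
      have hφlt : φ < Real.pi / 2 := Real.arctan_lt_pi_div_two c
      have hφgt : -(Real.pi / 2) < φ := Real.neg_pi_div_two_lt_arctan c
      have hθ1 : 0 ≤ s * t := by positivity
      have hθ2 : s * t < Real.pi / 2 - φ := by
        rw [hlk] at h2
        calc s * t = t * s := by ring
        _ < Real.pi / 2 - φ := by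
            rw [← div_mul_cancel₀ (Real.pi / 2 - φ) hs0.ne']
            exact mul_lt_mul_of_pos_right h2 hs0
      have hcos : 0 < Real.cos (s * t + φ) :=
        Real.cos_pos_of_mem_Ioo ⟨by linarith, by linarith⟩
      have hid : sigmaK k lam t * Real.cos φ = Real.cos (s * t + φ) := by
        rw [hσ]
        simp only
        rw [Real.cos_add, hsc, hcdef]
        field_simp
      nlinarith [hcos, hcosφ, hid]
    · simp only
      rw [hsl, Real.sin_pi_div_two_sub, Real.cos_pi_div_two_sub, hsc]
      have hlc : 0 ≤ lam * c := by
        have : lam * c = lam ^ 2 / s := by rw [hcdef]; ring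
        rw [this]; positivity
      nlinarith [mul_pos hs0 hcosφ, mul_nonneg hlc hcosφ.le]

/-- Proposition 1(1): a function satisfying `f'' ≤ -k f`, `f(0) = 1`, `f(l) ≥ 0`
on `[0, l]`, where `l = l_k(λ)`, dominates the model solution `f̄ = σ_{k,λ}`
(which satisfies `f̄'' = -k f̄`, `f̄(0) = 1`, `f̄(l) = 0`). -/
theorem stmt_1 (k lam : ℝ)
    (hlam0 : k = 0 → 0 < lam) (hlamneg : k < 0 → Real.sqrt (-k) < lam)
    (l : ℝ) (hl : l = lk k lam)
    (f f' f'' : ℝ → ℝ)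
    (hd1 : ∀ t ∈ Set.Icc 0 l, HasDerivAt f (f' t) t)
    (hd2 : ∀ t ∈ Set.Icc 0 l, HasDerivAt f' (f'' t) t)
    (hineq : ∀ t ∈ Set.Icc 0 l, f'' t ≤ -k * f t)
    (hf0 : f 0 = 1) (hfl : 0 ≤ f l) :
    ∀ t ∈ Set.Icc 0 l, sigmaK k lam t ≤ f t := by
  obtain ⟨S', hS1, hS2, hσ0, hσl, hσpos, hσ'l⟩ := model k lam hlam0 hlamneg
  rw [← hl] at hσl hσpos hσ'l
  intro t ht
  have h0l : (0:ℝ) ≤ l := le_trans ht.1 ht.2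
  have hll : l ∈ Set.Icc 0 l := ⟨h0l, le_refl l⟩
  have hSnn : ∀ u ∈ Set.Icc 0 l, 0 ≤ sigmaK k lam u := by
    intro u hu
    rcases eq_or_lt_of_le hu.2 with h | h
    · rw [h, hσl]
    · exact (hσpos u ⟨hu.1, h⟩).le
  set q : ℝ → ℝ :=
    fun u => (f' u - S' u) * sigmaK k lam u - (f u - sigmaK k lam u) * S' u with hq
  have hqd : ∀ u ∈ Set.Icc 0 l,
      HasDerivAt q ((f'' u + k * f u) * sigmaK k lam u) u := by
    intro u hu
    have h1 := ((hd2 u hu).sub (hS2 u)).mul (hS1 u)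
    have h2 := ((hd1 u hu).sub (hS1 u)).mul (hS2 u)
    have h3 := h1.sub h2
    refine h3.congr_deriv (Eq.symm ?_)
    simp only [Pi.sub_apply]
    ring
  have hqc : ContinuousOn q (Set.Icc 0 l) :=
    fun u hu => (hqd u hu).continuousAt.continuousWithinAt
  have hqanti : AntitoneOn q (Set.Icc 0 l) := by
    apply antitoneOn_of_deriv_nonpos (convex_Icc 0 l) hqc
    · intro u hu
      rw [interior_Icc] at hu
      exact (hqd u (Set.Ioo_subset_Icc_self hu)).differentiableAt.differentiableWithinAt
    · intro u hu
      rw [interior_Icc] at hu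
      have hu' := Set.Ioo_subset_Icc_self hu
      rw [(hqd u hu').deriv]
      have h1 : f'' u + k * f u ≤ 0 := by linarith [hineq u hu']
      exact mul_nonpos_of_nonpos_of_nonneg h1 (hSnn u hu')
  have hql : 0 ≤ q l := by
    simp only [hq, hσl]
    nlinarith [hfl, hσ'l]
  have hqnn : ∀ u ∈ Set.Icc 0 l, 0 ≤ q u := fun u hu =>
    le_trans hql (hqanti hu hll hu.2)
  rcases eq_or_lt_of_le ht.2 with heq | hlt
  · rw [heq, hσl]; exact hfl
  · have hSpos : ∀ u ∈ Set.Icc 0 t, 0 < sigmaK k lam u := fun u hu =>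
      hσpos u ⟨hu.1, lt_of_le_of_lt hu.2 hlt⟩
    have hsub : Set.Icc 0 t ⊆ Set.Icc 0 l := Set.Icc_subset_Icc_right hlt.le
    set r : ℝ → ℝ := fun u => (f u - sigmaK k lam u) / sigmaK k lam u with hr
    have hrd : ∀ u ∈ Set.Icc 0 t, HasDerivAt r (q u / sigmaK k lam u ^ 2) u := by
      intro u hu
      have h := ((hd1 u (hsub hu)).sub (hS1 u)).div (hS1 u) (hSpos u hu).ne'
      exact h.congr_deriv rfl
    have hrmono : MonotoneOn r (Set.Icc 0 t) := by
      apply monotoneOn_of_deriv_nonneg (convex_Icc 0 t)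
        (fun u hu => (hrd u hu).continuousAt.continuousWithinAt)
      · intro u hu
        rw [interior_Icc] at hu
        exact (hrd u (Set.Ioo_subset_Icc_self hu)).differentiableAt.differentiableWithinAt
      · intro u hu
        rw [interior_Icc] at hu
        have hu' := Set.Ioo_subset_Icc_self hu
        rw [(hrd u hu').deriv]
        exact div_nonneg (hqnn u (hsub hu')) (sq_nonneg _)
    have h0t : (0:ℝ) ∈ Set.Icc 0 t := ⟨le_refl 0, ht.1⟩
    have htt : t ∈ Set.Icc 0 t := ⟨ht.1, le_refl t⟩
    have h5 := hrmono h0t htt ht.1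
    have hr0 : r 0 = 0 := by simp [hr, hf0, hσ0]
    rw [hr0] at h5
    have hSt := hSpos t htt
    have h6 : r t = (f t - sigmaK k lam t) / sigmaK k lam t := by rw [hr]
    rw [h6] at h5
    rcases div_nonneg_iff.mp h5 with ⟨ha, _⟩ | ⟨_, hb⟩
    · linarith
    · linarith
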